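/- Let M N : ℕ be positive, and let J₁ : Matrix (Fin M) (Fin M) ℝ and J₂ : Matrix (Fin N) (Fin N) ℝ be negative semidefinite, i.e. (-J₁).PosSemidef and (-J₂).PosSemidef. Then J₁ ⊞ J₂ is negative semidefinite, and 0 is an eigenvalue of J₁ ⊞ J₂ of multiplicity 1 (i.e. Module.finrank ℝ (LinearMap.ker (Matrix.mulVecLin (J₁ ⊞ J₂))) = 1) if and only if 0 is an eigenvalue of multiplicity 1 of both J₁ and J₂ (i.e. Module.finrank ℝ (LinearMap.ker (Matrix.mulVecLin J₁)) = 1 and Module.finrank ℝ (LinearMap.ker (Matrix.mulVecLin J₂)) = 1). -/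

import Mathlib

open Matrix


/-- The Kronecker sum `A ⊞ B = A ⊗ I_N + I_M ⊗ B` of two square matrices. -/
def kronSum {M N : ℕ} (A : Matrix (Fin M) (Fin M) ℝ) (B : Matrix (Fin N) (Fin N) ℝ) :
    Matrix (Fin M × Fin N) (Fin M × Fin N) ℝ :=
  fun p q => (if p.2 = q.2 then A p.1 q.1 else 0) + (if p.1 = q.1 then B p.2 q.2 else 0)

lemma kronSum_mulVec {M N : ℕ} (A : Matrix (Fin M) (Fin M) ℝ) (B : Matrix (Fin N) (Fin N) ℝ)
    (x : Fin M × Fin N → ℝ) (p : Fin M × Fin N) :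
    (kronSum A B *ᵥ x) p = (A *ᵥ fun k => x (k, p.2)) p.1 + (B *ᵥ fun j => x (p.1, j)) p.2 := by
  simp only [Matrix.mulVec, dotProduct, kronSum, Fintype.sum_prod_type, add_mul,
    Finset.sum_add_distrib, ite_mul, zero_mul]
  congr 1
  · simp
  · rw [Finset.sum_comm]
    simp

lemma kronSum_neg {M N : ℕ} (A : Matrix (Fin M) (Fin M) ℝ) (B : Matrix (Fin N) (Fin N) ℝ) :
    kronSum (-A) (-B) = -(kronSum A B) := by
  ext p q
  simp only [kronSum, Matrix.neg_apply]
  split_ifs <;> ring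

lemma dot_kronSum_mulVec {M N : ℕ} (A : Matrix (Fin M) (Fin M) ℝ) (B : Matrix (Fin N) (Fin N) ℝ)
    (x : Fin M × Fin N → ℝ) :
    x ⬝ᵥ (kronSum A B *ᵥ x) =
      (∑ i : Fin N, (fun k => x (k, i)) ⬝ᵥ (A *ᵥ fun k => x (k, i))) +
        ∑ l : Fin M, (fun j => x (l, j)) ⬝ᵥ (B *ᵥ fun j => x (l, j)) := by
  simp only [dotProduct, Fintype.sum_prod_type, kronSum_mulVec, mul_add,
    Finset.sum_add_distrib]
  congr 1
  rw [Finset.sum_comm]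

lemma kronSum_posSemidef {M N : ℕ} {A : Matrix (Fin M) (Fin M) ℝ} {B : Matrix (Fin N) (Fin N) ℝ}
    (hA : A.PosSemidef) (hB : B.PosSemidef) : (kronSum A B).PosSemidef := by
  refine Matrix.PosSemidef.of_dotProduct_mulVec_nonneg ?_ ?_
  · have h1 : ∀ l k, A k l = A l k := fun l k => congr_fun (congr_fun hA.1 l) k
    have h2 : ∀ i j, B j i = B i j := fun i j => congr_fun (congr_fun hB.1 i) j
    ext p q
    simp only [Matrix.conjTranspose_apply, kronSum, star_trivial]
    by_cases e2 : p.2 = q.2 <;> by_cases e1 : p.1 = q.1 <;>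
      simp [e1, e2, eq_comm, h1, h2]
  · intro x
    rw [star_trivial, dot_kronSum_mulVec]
    have t1 : ∀ i : Fin N, 0 ≤ (fun k => x (k, i)) ⬝ᵥ (A *ᵥ fun k => x (k, i)) := by
      intro i; simpa using hA.dotProduct_mulVec_nonneg fun k => x (k, i)
    have t2 : ∀ l : Fin M, 0 ≤ (fun j => x (l, j)) ⬝ᵥ (B *ᵥ fun j => x (l, j)) := by
      intro l; simpa using hB.dotProduct_mulVec_nonneg fun j => x (l, j)
    exact add_nonneg (Finset.sum_nonneg fun i _ => t1 i) (Finset.sum_nonneg fun l _ => t2 l)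

/-- Kernel characterization for the Kronecker sum of negative semidefinite matrices. -/
lemma kronSum_mem_ker_iff {M N : ℕ} {J₁ : Matrix (Fin M) (Fin M) ℝ}
    {J₂ : Matrix (Fin N) (Fin N) ℝ} (hJ₁ : (-J₁).PosSemidef) (hJ₂ : (-J₂).PosSemidef)
    (x : Fin M × Fin N → ℝ) :
    kronSum J₁ J₂ *ᵥ x = 0 ↔
      (∀ i : Fin N, J₁ *ᵥ (fun k => x (k, i)) = 0) ∧
        (∀ l : Fin M, J₂ *ᵥ (fun j => x (l, j)) = 0) := by
  constructor
  · intro hx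
    have hdot : x ⬝ᵥ (kronSum J₁ J₂ *ᵥ x) = 0 := by rw [hx, dotProduct_zero]
    rw [dot_kronSum_mulVec] at hdot
    have t1 : ∀ i : Fin N, (fun k => x (k, i)) ⬝ᵥ (J₁ *ᵥ fun k => x (k, i)) ≤ 0 := by
      intro i
      have := hJ₁.dotProduct_mulVec_nonneg fun k => x (k, i)
      simp only [star_trivial, Matrix.neg_mulVec, dotProduct_neg] at this
      linarith
    have t2 : ∀ l : Fin M, (fun j => x (l, j)) ⬝ᵥ (J₂ *ᵥ fun j => x (l, j)) ≤ 0 := by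
      intro l
      have := hJ₂.dotProduct_mulVec_nonneg fun j => x (l, j)
      simp only [star_trivial, Matrix.neg_mulVec, dotProduct_neg] at this
      linarith
    have s1 : (∑ i : Fin N, (fun k => x (k, i)) ⬝ᵥ (J₁ *ᵥ fun k => x (k, i))) ≤ 0 :=
      Finset.sum_nonpos fun i _ => t1 i
    have s2 : (∑ l : Fin M, (fun j => x (l, j)) ⬝ᵥ (J₂ *ᵥ fun j => x (l, j))) ≤ 0 :=
      Finset.sum_nonpos fun l _ => t2 l
    have e1 : (∑ i : Fin N, (fun k => x (k, i)) ⬝ᵥ (J₁ *ᵥ fun k => x (k, i))) = 0 := by linarith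
    have e2 : (∑ l : Fin M, (fun j => x (l, j)) ⬝ᵥ (J₂ *ᵥ fun j => x (l, j))) = 0 := by linarith
    constructor
    · intro i
      have hz : (fun k => x (k, i)) ⬝ᵥ (J₁ *ᵥ fun k => x (k, i)) = 0 :=
        (Finset.sum_eq_zero_iff_of_nonpos (fun i _ => t1 i)).mp e1 i (Finset.mem_univ _)
      have : (-J₁) *ᵥ (fun k => x (k, i)) = 0 := by
        rw [← (hJ₁.dotProduct_mulVec_zero_iff fun k => x (k, i))]
        simp only [star_trivial, Matrix.neg_mulVec, dotProduct_neg, hz, neg_zero]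
      rwa [Matrix.neg_mulVec, neg_eq_zero] at this
    · intro l
      have hz : (fun j => x (l, j)) ⬝ᵥ (J₂ *ᵥ fun j => x (l, j)) = 0 :=
        (Finset.sum_eq_zero_iff_of_nonpos (fun l _ => t2 l)).mp e2 l (Finset.mem_univ _)
      have : (-J₂) *ᵥ (fun j => x (l, j)) = 0 := by
        rw [← (hJ₂.dotProduct_mulVec_zero_iff fun j => x (l, j))]
        simp only [star_trivial, Matrix.neg_mulVec, dotProduct_neg, hz, neg_zero]
      rwa [Matrix.neg_mulVec, neg_eq_zero] at this
  · rintro ⟨h1, h2⟩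
    funext p
    rw [kronSum_mulVec, h1 p.2, h2 p.1, Pi.zero_apply, Pi.zero_apply, add_zero, Pi.zero_apply]

set_option maxHeartbeats 2000000 in
theorem kronSum_negSemidef_and_simple_zero_iff
    (M N : ℕ) (hM : 0 < M) (hN : 0 < N)
    (J₁ : Matrix (Fin M) (Fin M) ℝ) (J₂ : Matrix (Fin N) (Fin N) ℝ)
    (hJ₁ : (-J₁).PosSemidef) (hJ₂ : (-J₂).PosSemidef) :
    (-(kronSum J₁ J₂)).PosSemidef ∧
      (Module.finrank ℝ (LinearMap.ker (Matrix.mulVecLin (kronSum J₁ J₂))) = 1 ↔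
        (Module.finrank ℝ (LinearMap.ker (Matrix.mulVecLin J₁)) = 1 ∧
          Module.finrank ℝ (LinearMap.ker (Matrix.mulVecLin J₂)) = 1)) := by
  refine ⟨by rw [← kronSum_neg]; exact kronSum_posSemidef hJ₁ hJ₂, ?_⟩
  set K₁ := LinearMap.ker (Matrix.mulVecLin J₁) with hK₁
  set K₂ := LinearMap.ker (Matrix.mulVecLin J₂) with hK₂
  set r₁ := Module.finrank ℝ K₁ with hr₁
  set r₂ := Module.finrank ℝ K₂ with hr₂
  have b₁ : Module.Basis (Fin r₁) ℝ K₁ := Module.finBasis ℝ K₁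
  have b₂ : Module.Basis (Fin r₂) ℝ K₂ := Module.finBasis ℝ K₂
  -- the product family
  set v : Fin r₁ × Fin r₂ → (Fin M × Fin N → ℝ) :=
    fun a p => (b₁ a.1 : Fin M → ℝ) p.1 * (b₂ a.2 : Fin N → ℝ) p.2 with hv
  have hmem : ∀ a, v a ∈ LinearMap.ker (Matrix.mulVecLin (kronSum J₁ J₂)) := by
    intro a
    rw [LinearMap.mem_ker, Matrix.mulVecLin_apply, kronSum_mem_ker_iff hJ₁ hJ₂]
    constructor
    · intro i
      have : (fun k => v a (k, i)) = (b₂ a.2 : Fin N → ℝ) i • (b₁ a.1 : Fin M → ℝ) := by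
        funext k; simp [hv, mul_comm]
      rw [this, Matrix.mulVec_smul]
      have h0 : J₁ *ᵥ (b₁ a.1 : Fin M → ℝ) = 0 := (b₁ a.1).2
      rw [h0, smul_zero]
    · intro l
      have : (fun j => v a (l, j)) = (b₁ a.1 : Fin M → ℝ) l • (b₂ a.2 : Fin N → ℝ) := by
        funext j; simp [hv]
      rw [this, Matrix.mulVec_smul]
      have h0 : J₂ *ᵥ (b₂ a.2 : Fin N → ℝ) = 0 := (b₂ a.2).2
      rw [h0, smul_zero]
  have hb₁li : LinearIndependent ℝ (fun a => (b₁ a : Fin M → ℝ)) :=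
    b₁.linearIndependent.map' K₁.subtype (LinearMap.ker_eq_bot.mpr Subtype.coe_injective)
  have hb₂li : LinearIndependent ℝ (fun a => (b₂ a : Fin N → ℝ)) :=
    b₂.linearIndependent.map' K₂.subtype (LinearMap.ker_eq_bot.mpr Subtype.coe_injective)
  have hli : LinearIndependent ℝ v := by
    rw [Fintype.linearIndependent_iff]
    intro g hg a
    have key : ∀ i : Fin N, ∀ a1 : Fin r₁, (∑ c : Fin r₂, g (a1, c) * (b₂ c : Fin N → ℝ) i) = 0 := by
      intro i
      have : (∑ a1 : Fin r₁, (∑ c : Fin r₂, g (a1, c) * (b₂ c : Fin N → ℝ) i) •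
          (fun l => (b₁ a1 : Fin M → ℝ) l)) = 0 := by
        funext l
        have := congr_fun hg (l, i)
        simp only [Fintype.sum_prod_type, Finset.sum_apply, Pi.smul_apply, Pi.zero_apply,
          smul_eq_mul, hv] at this ⊢
        rw [← this]
        apply Finset.sum_congr rfl
        intro a1 _
        rw [Finset.sum_mul]
        apply Finset.sum_congr rfl
        intro c _
        ring
      exact Fintype.linearIndependent_iff.mp hb₁li _ this
    have : (∑ c : Fin r₂, g (a.1, c) • (fun i => (b₂ c : Fin N → ℝ) i)) = 0 := by
      funext i
      simpa using key i a.1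
    have := Fintype.linearIndependent_iff.mp hb₂li _ this a.2
    simpa using this
  have hspan : LinearMap.ker (Matrix.mulVecLin (kronSum J₁ J₂)) = Submodule.span ℝ (Set.range v) := by
    apply le_antisymm
    · intro x hx
      rw [LinearMap.mem_ker, Matrix.mulVecLin_apply, kronSum_mem_ker_iff hJ₁ hJ₂] at hx
      obtain ⟨hcol, hrow⟩ := hx
      -- extension functionals for b₁.coord
      obtain ⟨q, hq⟩ := Submodule.exists_isCompl K₁
      set φ : Fin r₁ → ((Fin M → ℝ) →ₗ[ℝ] ℝ) :=
        fun a => (b₁.coord a) ∘ₗ (K₁.linearProjOfIsCompl q hq) with hφ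
      have hφleft : ∀ a (u : K₁), φ a (u : Fin M → ℝ) = b₁.repr u a := by
        intro a u
        simp [hφ, Submodule.linearProjOfIsCompl, Submodule.projectionOnto_apply_left, Module.Basis.coord_apply]
      set c : Fin r₁ → (Fin N → ℝ) := fun a i => φ a (fun k => x (k, i)) with hc
      have hcmem : ∀ a, c a ∈ K₂ := by
        intro a
        have hrepr : c a = ∑ l : Fin M, (φ a (Pi.single l 1)) • (fun j => x (l, j)) := by
          funext i
          have hx' : (fun k => x (k, i)) = ∑ l : Fin M, x (l, i) • (Pi.single l 1 : Fin M → ℝ) := by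
            funext k
            simp [Pi.single_apply, Finset.sum_apply, eq_comm]
          simp only [hc, Finset.sum_apply, Pi.smul_apply, smul_eq_mul]
          rw [hx', map_sum]
          apply Finset.sum_congr rfl
          intro l _
          rw [LinearMap.map_smul, smul_eq_mul, mul_comm]
        rw [hrepr]
        exact Submodule.sum_mem _ fun l _ => Submodule.smul_mem _ _ (hrow l)
      have hxrepr : ∀ p : Fin M × Fin N, x p = ∑ a : Fin r₁, (b₁ a : Fin M → ℝ) p.1 * c a p.2 := by
        intro p
        have hu : (⟨fun k => x (k, p.2), hcol p.2⟩ : K₁) =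
            ∑ a : Fin r₁, b₁.repr ⟨fun k => x (k, p.2), hcol p.2⟩ a • b₁ a :=
          (b₁.sum_repr _).symm
        have := congr_arg (fun u : K₁ => (u : Fin M → ℝ) p.1) hu
        simp only [Submodule.coe_sum, Submodule.coe_smul, Finset.sum_apply, Pi.smul_apply,
          smul_eq_mul] at this
        rw [this]
        apply Finset.sum_congr rfl
        intro a _
        rw [hc]
        simp only
        rw [hφleft a ⟨fun k => x (k, p.2), hcol p.2⟩]
        ring
      have hxeq : x = ∑ ac : Fin r₁ × Fin r₂,
          ((b₂.repr ⟨c ac.1, hcmem ac.1⟩ ac.2) * 1) • v ac := by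
        funext p
        rw [hxrepr p]
        simp only [Finset.sum_apply, Pi.smul_apply, smul_eq_mul, Fintype.sum_prod_type, hv]
        apply Finset.sum_congr rfl
        intro a _
        have hca : c a = ∑ cc : Fin r₂, b₂.repr ⟨c a, hcmem a⟩ cc • (b₂ cc : Fin N → ℝ) := by
          have := (b₂.sum_repr ⟨c a, hcmem a⟩).symm
          have := congr_arg (Submodule.subtype K₂) this
          simpa [Submodule.coe_sum, -Module.Basis.sum_repr] using this
        conv_lhs => rw [hca]
        simp only [Finset.sum_apply, Pi.smul_apply, smul_eq_mul, Finset.mul_sum]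
        apply Finset.sum_congr rfl
        intro cc _
        ring
      rw [hxeq]
      exact Submodule.sum_mem _ fun ac _ =>
        Submodule.smul_mem _ _ (Submodule.subset_span (Set.mem_range_self ac))
    · rw [Submodule.span_le]
      rintro y ⟨a, rfl⟩
      exact hmem a
  have hcard : Module.finrank ℝ (Submodule.span ℝ (Set.range v)) = Fintype.card (Fin r₁ × Fin r₂) :=
    finrank_span_eq_card hli
  rw [hspan, hcard]
  simp only [Fintype.card_prod, Fintype.card_fin]
  exact ⟨fun h => ⟨Nat.eq_one_of_mul_eq_one_right h, Nat.eq_one_of_mul_eq_one_left h⟩,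
    fun ⟨h1, h2⟩ => by rw [h1, h2]⟩
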